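/- Let Â₀, Â₁ be bounded self-adjoint operators and D̂ = Âᵢᵐ a power of one of them, φ a unit vector, with Var(D̂) > 0. Then Var(Â₀) + Var(Â₁) ≥ 2|½⟨{Â₁,Â₀}⟩ - ⟨Â₁⟩⟨Â₀⟩| + (1/Var(D̂))·|Cov(Â₁, D̂) ± Cov(Â₀, D̂)|² for an appropriate choice of sign, where Cov(X̂, Ŷ) = Re(⟨X̂Ŷ⟩) - ⟨X̂⟩⟨Ŷ⟩ arranged so the stated 3×3 covariance matrix of (D̂, Â₁, Â₀) is PSD. -/

import Mathlib

noncomputable def qExp' {H : Type*} [NormedAddCommGroup H] [InnerProductSpace ℂ H]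
    (φ : H) (X : H →L[ℂ] H) : ℝ := (inner ℂ φ (X φ) : ℂ).re

noncomputable def qVar' {H : Type*} [NormedAddCommGroup H] [InnerProductSpace ℂ H]
    (φ : H) (X : H →L[ℂ] H) : ℝ := qExp' φ (X * X) - (qExp' φ X) ^ 2

noncomputable def qCov' {H : Type*} [NormedAddCommGroup H] [InnerProductSpace ℂ H]
    (φ : H) (X Y : H →L[ℂ] H) : ℝ := qExp' φ (X * Y) - qExp' φ X * qExp' φ Y

lemma qExp'_mul_eq {H : Type*} [NormedAddCommGroup H] [InnerProductSpace ℂ H] [CompleteSpace H]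
    (φ : H) (X Y : H →L[ℂ] H) (hX : IsSelfAdjoint X) :
    qExp' φ (X * Y) = (inner ℂ (X φ) (Y φ) : ℂ).re := by
  unfold qExp'
  rw [ContinuousLinearMap.mul_apply, ← ContinuousLinearMap.adjoint_inner_left,
    hX.adjoint_eq]

lemma qCov'_eq {H : Type*} [NormedAddCommGroup H] [InnerProductSpace ℂ H] [CompleteSpace H]
    (φ : H) (hφ : ‖φ‖ = 1) (X Y : H →L[ℂ] H) (hX : IsSelfAdjoint X) :
    qCov' φ X Y =
      (inner ℂ (X φ - (qExp' φ X : ℂ) • φ) (Y φ - (qExp' φ Y : ℂ) • φ) : ℂ).re := by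
  have h1 : (inner ℂ φ φ : ℂ) = 1 := by
    rw [inner_self_eq_norm_sq_to_K, hφ]; norm_num
  have hXφ : (inner ℂ (X φ) φ : ℂ).re = qExp' φ X := inner_re_symm (𝕜 := ℂ) _ _
  rw [inner_sub_left, inner_sub_right, inner_sub_right, inner_smul_left, inner_smul_right,
    inner_smul_left, inner_smul_right, h1, Complex.conj_ofReal]
  simp only [qCov', qExp'_mul_eq φ X Y hX, Complex.sub_re, Complex.mul_re, Complex.ofReal_re,
    Complex.ofReal_im, mul_one, Complex.one_re]
  unfold qExp' at *
  rw [← hXφ]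
  ring

theorem stmt_16 {H : Type*} [NormedAddCommGroup H] [InnerProductSpace ℂ H] [CompleteSpace H]
    (A : Fin 2 → (H →L[ℂ] H)) (hA : ∀ i, IsSelfAdjoint (A i))
    (i : Fin 2) (m : ℕ) (hm : 1 < m) (D : H →L[ℂ] H) (hD : D = (A i) ^ m)
    (φ : H) (hφ : ‖φ‖ = 1) (hVD : 0 < qVar' φ D) :
    ∃ ε : ℝ, (ε = 1 ∨ ε = -1) ∧
      qVar' φ (A 0) + qVar' φ (A 1) ≥
        2 * |(1 / 2) * qExp' φ (A 1 * A 0 + A 0 * A 1) - qExp' φ (A 1) * qExp' φ (A 0)| +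
          (1 / qVar' φ D) * |qCov' φ (A 1) D + ε * qCov' φ (A 0) D| ^ 2 := by
  have hD' : IsSelfAdjoint D := hD ▸ (hA i).pow m
  set a1 : H := A 1 φ - (qExp' φ (A 1) : ℂ) • φ with ha1
  set a0 : H := A 0 φ - (qExp' φ (A 0) : ℂ) • φ with ha0
  set d : H := D φ - (qExp' φ D : ℂ) • φ with hd
  have hc10 : qCov' φ (A 1) (A 0) = (inner ℂ a1 a0 : ℂ).re := qCov'_eq φ hφ _ _ (hA 1)
  have hc1d : qCov' φ (A 1) D = (inner ℂ a1 d : ℂ).re := qCov'_eq φ hφ _ _ (hA 1)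
  have hc0d : qCov' φ (A 0) D = (inner ℂ a0 d : ℂ).re := qCov'_eq φ hφ _ _ (hA 0)
  have hvar : ∀ X : H →L[ℂ] H, IsSelfAdjoint X →
      qVar' φ X = ‖X φ - (qExp' φ X : ℂ) • φ‖ ^ 2 := by
    intro X hX
    have : qVar' φ X = qCov' φ X X := by simp [qVar', qCov', sq]
    rw [this, qCov'_eq φ hφ X X hX]
    exact inner_self_eq_norm_sq (𝕜 := ℂ) _
  have hv0 : qVar' φ (A 0) = ‖a0‖ ^ 2 := hvar _ (hA 0)
  have hv1 : qVar' φ (A 1) = ‖a1‖ ^ 2 := hvar _ (hA 1)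
  have hvd : qVar' φ D = ‖d‖ ^ 2 := hvar _ hD'
  -- anticommutator term
  have hanti : (1 / 2) * qExp' φ (A 1 * A 0 + A 0 * A 1) - qExp' φ (A 1) * qExp' φ (A 0)
      = qCov' φ (A 1) (A 0) := by
    have he : qExp' φ (A 1 * A 0 + A 0 * A 1) = qExp' φ (A 1 * A 0) + qExp' φ (A 0 * A 1) := by
      simp [qExp', inner_add_right]
    have h2 : qExp' φ (A 0 * A 1) = qExp' φ (A 1 * A 0) := by
      rw [qExp'_mul_eq φ _ _ (hA 0), qExp'_mul_eq φ _ _ (hA 1)]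
      exact inner_re_symm (𝕜 := ℂ) _ _
    rw [he, h2, qCov']; ring
  set c : ℝ := (inner ℂ a1 a0 : ℂ).re with hc
  set ε : ℝ := if 0 ≤ c then -1 else 1 with hε
  refine ⟨ε, by by_cases h : 0 ≤ c <;> simp [hε, h], ?_⟩
  have hεc : ε * c = -|c| := by
    by_cases h : 0 ≤ c
    · simp [hε, h, abs_of_nonneg h]
    · simp [hε, h, abs_of_neg (lt_of_not_ge h)]
  set u : H := a1 + (ε : ℂ) • a0 with hu
  have hae : |ε| = 1 := by by_cases h : 0 ≤ c <;> simp [hε, h]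
  have hnu : ‖u‖ ^ 2 = ‖a1‖ ^ 2 + ‖a0‖ ^ 2 - 2 * |c| := by
    have := norm_add_sq (𝕜 := ℂ) a1 ((ε : ℂ) • a0)
    rw [hu, this, inner_smul_right, norm_smul]
    simp [Complex.mul_re, ← hc, hεc, hae]
    ring
  have hiu : (inner ℂ u d : ℂ).re = (inner ℂ a1 d : ℂ).re + ε * (inner ℂ a0 d : ℂ).re := by
    rw [hu, inner_add_left, inner_smul_left, Complex.conj_ofReal]
    simp [Complex.add_re, Complex.mul_re]
  have hcs : ((inner ℂ u d : ℂ).re) ^ 2 ≤ ‖u‖ ^ 2 * ‖d‖ ^ 2 := by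
    have h1 : |(inner ℂ u d : ℂ).re| ≤ ‖(inner ℂ u d : ℂ)‖ := Complex.abs_re_le_norm _
    have h2 : ‖(inner ℂ u d : ℂ)‖ ≤ ‖u‖ * ‖d‖ := norm_inner_le_norm _ _
    calc ((inner ℂ u d : ℂ).re) ^ 2 = |(inner ℂ u d : ℂ).re| ^ 2 := (sq_abs _).symm
      _ ≤ (‖u‖ * ‖d‖) ^ 2 := by
          apply pow_le_pow_left₀ (abs_nonneg _) (h1.trans h2)
      _ = ‖u‖ ^ 2 * ‖d‖ ^ 2 := by ring
  have hdpos : (0:ℝ) < ‖d‖ ^ 2 := hvd ▸ hVD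
  have hr : ((inner ℂ a1 d : ℂ).re + ε * (inner ℂ a0 d : ℂ).re) ^ 2
      ≤ (‖a1‖ ^ 2 + ‖a0‖ ^ 2 - 2 * |c|) * ‖d‖ ^ 2 := by
    rw [← hiu, ← hnu]; exact hcs
  have hfin : ((inner ℂ a1 d : ℂ).re + ε * (inner ℂ a0 d : ℂ).re) ^ 2 / ‖d‖ ^ 2
      ≤ ‖a1‖ ^ 2 + ‖a0‖ ^ 2 - 2 * |c| := (div_le_iff₀ hdpos).mpr hr
  rw [ge_iff_le, hanti, hc10, hc1d, hc0d, hv0, hv1, hvd, sq_abs, one_div, inv_mul_eq_div]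
  linarith [hfin]
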